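/- Let n ≥ 1 and d ≥ 1, and let P ∈ ℝ[X_1,…,X_n] be a non-zero multi-affine polynomial of total degree at most d. Then the real zero set Z(P, ℝ^n) = {x ∈ ℝ^n : P(x) = 0} has at most 2^{d−1} connected components (with respect to the Euclidean topology on ℝ^n). -/

import Mathlib

open MvPolynomial

namespace MultiAffine

variable {n : ℕ}




/-- evaluation of a polynomial as function is continuous -/
lemma continuous_eval (Q : MvPolynomial (Fin n) ℝ) :
    Continuous fun x : Fin n → ℝ => eval x Q := by
  induction Q using MvPolynomial.induction_on with
  | C a => simpa using continuous_const
  | add p q hp hq => simp only [map_add]; exact hp.add hq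
  | mul_X p i hp => simp only [map_mul, eval_X]; exact hp.mul (continuous_apply i)

lemma mem_support_le_degreeOf {Q : MvPolynomial (Fin n) ℝ} {v : Fin n →₀ ℕ} (hv : v ∈ Q.support)
    (i : Fin n) : v i ≤ Q.degreeOf i := by
  rw [degreeOf_eq_sup]
  exact Finset.le_sup (f := fun m => m i) hv

lemma eval_monomial_univ (x : Fin n → ℝ) (v : Fin n →₀ ℕ) (c : ℝ) :
    eval x (monomial v c) = c * ∏ k, x k ^ v k := by
  rw [eval_monomial]
  congr 1
  exact Finsupp.prod_fintype _ _ fun k => pow_zero _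

/-- the key affine-in-each-variable identity, monomial case -/
lemma eval_update_affine_monomial (v : Fin n →₀ ℕ) (c : ℝ) (i : Fin n) (hv : v i ≤ 1)
    (x : Fin n → ℝ) (t : ℝ) :
    eval (Function.update x i t) (monomial v c)
      = eval x (monomial v c) + (t - x i) * eval x (pderiv i (monomial v c)) := by
  classical
  rw [pderiv_monomial, eval_monomial_univ, eval_monomial_univ, eval_monomial_univ]
  have hupd : (fun k => Function.update x i t k ^ v k)
      = Function.update (fun k => x k ^ v k) i (t ^ v i) := by
    funext k
    by_cases hk : k = i
    · subst hk; simp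
    · simp [Function.update_of_ne hk]
  have hx : (fun k => x k ^ v k) = Function.update (fun k => x k ^ v k) i (x i ^ v i) := by
    funext k
    by_cases hk : k = i
    · subst hk; simp
    · simp [Function.update_of_ne hk]
  have hw : (fun k => x k ^ ((v - Finsupp.single i 1 : Fin n →₀ ℕ) k))
      = Function.update (fun k => x k ^ v k) i (x i ^ (v i - 1)) := by
    funext k
    by_cases hk : k = i
    · subst hk; simp [Finsupp.tsub_apply, Finsupp.single_eq_same]
    · simp [Function.update_of_ne hk, Finsupp.tsub_apply,
        Finsupp.single_eq_of_ne' (Ne.symm hk)]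
  have h1 : ∏ k, Function.update x i t k ^ v k
      = t ^ v i * ∏ k ∈ Finset.univ \ {i}, x k ^ v k := by
    rw [hupd, Finset.prod_update_of_mem (Finset.mem_univ i)]
  have h2 : ∏ k, x k ^ v k = x i ^ v i * ∏ k ∈ Finset.univ \ {i}, x k ^ v k := by
    conv_lhs => rw [hx]
    rw [Finset.prod_update_of_mem (Finset.mem_univ i)]
  have h3 : ∏ k, x k ^ ((v - Finsupp.single i 1 : Fin n →₀ ℕ) k)
      = x i ^ (v i - 1) * ∏ k ∈ Finset.univ \ {i}, x k ^ v k := by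
    rw [hw, Finset.prod_update_of_mem (Finset.mem_univ i)]
  rw [h1, h2, h3]
  interval_cases h : v i
  · push_cast; ring
  · push_cast; ring

/-- key affine bridge -/
lemma eval_update_affine {Q : MvPolynomial (Fin n) ℝ} {i : Fin n} (hQ : Q.degreeOf i ≤ 1)
    (x : Fin n → ℝ) (t : ℝ) :
    eval (Function.update x i t) Q = eval x Q + (t - x i) * eval x (pderiv i Q) := by
  conv_lhs => rw [Q.as_sum]
  conv_rhs => rw [Q.as_sum]
  rw [map_sum, map_sum, map_sum, map_sum, Finset.mul_sum, ← Finset.sum_add_distrib]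
  refine Finset.sum_congr rfl fun v hv => ?_
  exact eval_update_affine_monomial v _ i (le_trans (mem_support_le_degreeOf hv i) hQ) x t





lemma pderiv_eq_sum (i : Fin n) (Q : MvPolynomial (Fin n) ℝ) :
    pderiv i Q = ∑ v ∈ Q.support, monomial (v - Finsupp.single i 1) (coeff v Q * v i) := by
  conv_lhs => rw [Q.as_sum]
  rw [map_sum]
  refine Finset.sum_congr rfl fun v _ => ?_
  rw [pderiv_monomial]

lemma exists_src {i : Fin n} {Q : MvPolynomial (Fin n) ℝ} {m : Fin n →₀ ℕ}
    (hm : m ∈ (pderiv i Q).support) :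
    ∃ v ∈ Q.support, v i ≠ 0 ∧ m = v - Finsupp.single i 1 := by
  classical
  rw [pderiv_eq_sum] at hm
  obtain ⟨v, hv, hmv⟩ := Finset.mem_biUnion.1 (support_sum hm)
  refine ⟨v, hv, ?_, ?_⟩
  · intro h0
    simp [h0] at hmv
  · have := support_monomial (a := coeff v Q * (v i : ℝ)) (s := v - Finsupp.single i 1)
      (h := Classical.dec _) ▸ hmv
    by_cases hc : coeff v Q * (v i : ℝ) = 0
    · simp [hc] at this
    · simp [hc] at this
      exact this

lemma degreeOf_pderiv_le (i k : Fin n) (Q : MvPolynomial (Fin n) ℝ) :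
    degreeOf k (pderiv i Q) ≤ degreeOf k Q := by
  rw [degreeOf_le_iff]
  intro m hm
  obtain ⟨v, hv, -, rfl⟩ := exists_src hm
  have h1 : (v - Finsupp.single i 1 : Fin n →₀ ℕ) k ≤ v k := by
    rw [Finsupp.tsub_apply]; exact Nat.sub_le _ _
  have h2 : v k ≤ degreeOf k Q := by
    rw [degreeOf_eq_sup]; exact Finset.le_sup (f := fun m => m k) hv
  omega

lemma degreeOf_pderiv_self {i : Fin n} {Q : MvPolynomial (Fin n) ℝ} (h : degreeOf i Q ≤ 1) :
    degreeOf i (pderiv i Q) = 0 := by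
  rw [← Nat.le_zero, degreeOf_le_iff]
  intro m hm
  obtain ⟨v, hv, -, rfl⟩ := exists_src hm
  have hv1 : v i ≤ 1 := le_trans (by rw [degreeOf_eq_sup]; exact Finset.le_sup (f := fun m => m i) hv) h
  rw [Finsupp.tsub_apply, Finsupp.single_eq_same]
  omega

lemma pderiv_eq_zero_of_degreeOf_eq_zero {i : Fin n} {Q : MvPolynomial (Fin n) ℝ}
    (h : degreeOf i Q = 0) : pderiv i Q = 0 := by
  rw [pderiv_eq_sum]
  refine Finset.sum_eq_zero fun v hv => ?_
  have : v i = 0 := by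
    have := degreeOf_eq_sup (R := ℝ) i Q ▸ h
    have h2 : v i ≤ 0 := this ▸ Finset.le_sup (f := fun m => m i) hv
    omega
  simp [this]

lemma pderiv_ne_zero {i : Fin n} {Q : MvPolynomial (Fin n) ℝ}
    (hma : ∀ j, degreeOf j Q ≤ 1) (h : degreeOf i Q ≠ 0) : pderiv i Q ≠ 0 := by
  classical
  -- find v₀ with v₀ i = 1
  have hne : Q.support.Nonempty := by
    rcases Finset.eq_empty_or_nonempty Q.support with he | hne
    · rw [degreeOf_eq_sup, he] at h; simp at h
    · exact hne
  obtain ⟨v₀, hv₀, hv₀i⟩ : ∃ v₀ ∈ Q.support, v₀ i = 1 := by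
    obtain ⟨v₀, hv₀, hsup⟩ := Finset.exists_mem_eq_sup Q.support hne (fun m => m i)
    refine ⟨v₀, hv₀, ?_⟩
    have h1 : v₀ i ≤ 1 := le_trans (by rw [degreeOf_eq_sup]; exact Finset.le_sup (f := fun m => m i) hv₀) (hma i)
    have h2 : degreeOf i Q = v₀ i := by rw [degreeOf_eq_sup]; exact hsup
    omega
  intro hz
  have hco : coeff (v₀ - Finsupp.single i 1) (pderiv i Q) = coeff v₀ Q := by
    rw [pderiv_eq_sum]
    rw [coeff_sum]
    rw [Finset.sum_eq_single v₀]
    · simp [coeff_monomial, hv₀i]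
    · intro v hv hvne
      rw [coeff_monomial]
      rcases Nat.eq_zero_or_pos (v i) with h0 | hpos
      · simp [h0]
      · rw [if_neg]
        intro heq
        apply hvne
        have hle1 : Finsupp.single i 1 ≤ v := by
          rw [Finsupp.single_le_iff]; omega
        have hle2 : Finsupp.single i 1 ≤ v₀ := by
          rw [Finsupp.single_le_iff]; omega
        have := congrArg (· + Finsupp.single i 1) heq
        simpa [tsub_add_cancel_of_le hle1, tsub_add_cancel_of_le hle2] using this
    · intro hv; exact (hv hv₀).elim
  rw [hz] at hco
  simp at hco
  exact (mem_support_iff.1 hv₀) hco.symm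

lemma totalDegree_pderiv_lt {i : Fin n} {Q : MvPolynomial (Fin n) ℝ}
    (hne : pderiv i Q ≠ 0) : totalDegree (pderiv i Q) + 1 ≤ totalDegree Q := by
  classical
  have key : ∀ m ∈ (pderiv i Q).support, (m.sum fun _ e => e) + 1 ≤ totalDegree Q := by
    intro m hm
    obtain ⟨v, hv, hvi, rfl⟩ := exists_src hm
    have hsum : ((v - Finsupp.single i 1).sum fun _ e => e) + 1 ≤ v.sum fun _ e => e := by
      rw [Finsupp.sum_fintype _ _ (fun _ => rfl), Finsupp.sum_fintype _ _ (fun _ => rfl)]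
      have hsplit1 : ∑ k, (v - Finsupp.single i 1 : Fin n →₀ ℕ) k
          = (∑ k ∈ Finset.univ \ {i}, (v - Finsupp.single i 1 : Fin n →₀ ℕ) k)
            + (v - Finsupp.single i 1 : Fin n →₀ ℕ) i :=
        Finset.sum_eq_sum_sdiff_singleton_add (Finset.mem_univ i) _
      have hsplit2 : ∑ k, v k = (∑ k ∈ Finset.univ \ {i}, v k) + v i :=
        Finset.sum_eq_sum_sdiff_singleton_add (Finset.mem_univ i) _
      have heq : ∑ k ∈ Finset.univ \ {i}, (v - Finsupp.single i 1 : Fin n →₀ ℕ) k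
          = ∑ k ∈ Finset.univ \ {i}, v k := by
        refine Finset.sum_congr rfl fun k hk => ?_
        have hki : k ≠ i := by simp at hk; exact hk
        rw [Finsupp.tsub_apply, Finsupp.single_eq_of_ne' (Ne.symm hki)]
        omega
      have hii : (v - Finsupp.single i 1 : Fin n →₀ ℕ) i = v i - 1 := by
        rw [Finsupp.tsub_apply, Finsupp.single_eq_same]
      rw [hsplit1, hsplit2, heq, hii]
      omega
    exact le_trans hsum (le_totalDegree hv)
  obtain ⟨m₀, hm₀, hsup⟩ := Finset.exists_mem_eq_sup _ (Finset.nonempty_iff_ne_empty.mpr (fun he => hne (support_eq_empty.mp he))) (fun m : Fin n →₀ ℕ => m.sum fun _ e => e)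
  calc totalDegree (pderiv i Q) + 1 = (m₀.sum fun _ e => e) + 1 := by rw [totalDegree, hsup]
    _ ≤ totalDegree Q := key m₀ hm₀






lemma pderiv_comm (i j : Fin n) (Q : MvPolynomial (Fin n) ℝ) :
    pderiv i (pderiv j Q) = pderiv j (pderiv i Q) := by
  rcases eq_or_ne i j with rfl | hij
  · rfl
  conv_lhs => rw [pderiv_eq_sum j Q]
  conv_rhs => rw [pderiv_eq_sum i Q]
  rw [map_sum, map_sum]
  refine Finset.sum_congr rfl fun v _ => ?_
  rw [pderiv_monomial, pderiv_monomial]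
  have h1 : (v - Finsupp.single j 1 : Fin n →₀ ℕ) i = v i := by
    rw [Finsupp.tsub_apply, Finsupp.single_eq_of_ne' (Ne.symm hij)]; omega
  have h2 : (v - Finsupp.single i 1 : Fin n →₀ ℕ) j = v j := by
    rw [Finsupp.tsub_apply, Finsupp.single_eq_of_ne' hij]; omega
  rw [h1, h2, tsub_right_comm]
  ring_nf

/-- partial derivative as a linear endomorphism -/
noncomputable def pd (i : Fin n) : Module.End ℝ (MvPolynomial (Fin n) ℝ) :=
  ((pderiv i : Derivation ℝ (MvPolynomial (Fin n) ℝ) (MvPolynomial (Fin n) ℝ)) :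
    MvPolynomial (Fin n) ℝ →ₗ[ℝ] MvPolynomial (Fin n) ℝ)

@[simp] lemma pd_apply (i : Fin n) (Q : MvPolynomial (Fin n) ℝ) : pd i Q = pderiv i Q := rfl

lemma pd_commute (i j : Fin n) : Commute (pd (n := n) i) (pd j) := by
  apply LinearMap.ext
  intro Q
  show pd i (pd j Q) = pd j (pd i Q)
  simp only [pd_apply]
  exact pderiv_comm i j Q

/-- iterated partial derivative over a finite set of variables -/
noncomputable def DD (S : Finset (Fin n)) (Q : MvPolynomial (Fin n) ℝ) : MvPolynomial (Fin n) ℝ :=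
  (S.noncommProd pd (fun a _ b _ _ => pd_commute a b)) Q

@[simp] lemma DD_empty (Q : MvPolynomial (Fin n) ℝ) : DD ∅ Q = Q := by
  unfold DD
  exact rfl

lemma DD_insert {i : Fin n} {S : Finset (Fin n)} (h : i ∉ S) (Q : MvPolynomial (Fin n) ℝ) :
    DD (insert i S) Q = pderiv i (DD S Q) := by
  classical
  unfold DD
  have key := Finset.noncommProd_insert_of_notMem S i pd (fun a _ b _ _ => pd_commute a b) h
  exact (LinearMap.congr_fun key Q).trans rfl

lemma DD_insert' {i : Fin n} {S : Finset (Fin n)} (h : i ∉ S) (Q : MvPolynomial (Fin n) ℝ) :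
    DD (insert i S) Q = DD S (pderiv i Q) := by
  classical
  unfold DD
  have key := Finset.noncommProd_insert_of_notMem' S i pd (fun a _ b _ _ => pd_commute a b) h
  exact (LinearMap.congr_fun key Q).trans (by simp [Module.End.mul_apply])

@[simp] lemma DD_zero (S : Finset (Fin n)) : DD S (0 : MvPolynomial (Fin n) ℝ) = 0 :=
  map_zero _


/-- multi-affineness -/
def MA (Q : MvPolynomial (Fin n) ℝ) : Prop := ∀ i, Q.degreeOf i ≤ 1

lemma MA.pderiv_ma {Q : MvPolynomial (Fin n) ℝ} (h : MA Q) (i : Fin n) : MA (pderiv i Q) :=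
  fun j => le_trans (degreeOf_pderiv_le i j Q) (h j)

lemma eval_indep {Q : MvPolynomial (Fin n) ℝ} {i : Fin n} (h : degreeOf i Q = 0)
    (x : Fin n → ℝ) (t : ℝ) : eval (Function.update x i t) Q = eval x Q := by
  rw [eval_update_affine (by omega : degreeOf i Q ≤ 1), pderiv_eq_zero_of_degreeOf_eq_zero h]
  simp

lemma DD_ma {S : Finset (Fin n)} {Q : MvPolynomial (Fin n) ℝ} (h : MA Q) : MA (DD S Q) := by
  classical
  induction S using Finset.induction_on with
  | empty => simpa using h
  | @insert i S hni ih => rw [DD_insert hni]; exact ih.pderiv_ma _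

lemma DD_degreeOf_zero {S : Finset (Fin n)} {Q : MvPolynomial (Fin n) ℝ} (hma : MA Q)
    {j : Fin n} (hj : j ∈ S) : degreeOf j (DD S Q) = 0 := by
  classical
  revert hj
  induction S using Finset.induction_on with
  | empty => intro hj; simp at hj
  | @insert i S hni ih =>
    intro hj
    rw [DD_insert hni]
    rcases Finset.mem_insert.1 hj with rfl | hjS
    · exact degreeOf_pderiv_self (DD_ma hma j)
    · have h1 : degreeOf j (pderiv i (DD S Q)) ≤ degreeOf j (DD S Q) := degreeOf_pderiv_le _ _ _
      have h2 : degreeOf j (DD S Q) = 0 := ih hjS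
      omega

lemma DD_erase {S : Finset (Fin n)} {i : Fin n} (hi : i ∈ S) (Q : MvPolynomial (Fin n) ℝ) :
    DD S Q = DD (S.erase i) (pderiv i Q) := by
  conv_lhs => rw [← Finset.insert_erase hi]
  exact DD_insert' (Finset.notMem_erase i S) Q

lemma DD_erase' {S : Finset (Fin n)} {i : Fin n} (hi : i ∈ S) (Q : MvPolynomial (Fin n) ℝ) :
    DD S Q = pderiv i (DD (S.erase i) Q) := by
  conv_lhs => rw [← Finset.insert_erase hi]
  exact DD_insert (Finset.notMem_erase i S) Q

lemma eval_ne_zero_of_totalDegree_eq_zero {Q : MvPolynomial (Fin n) ℝ} (hQ : Q ≠ 0)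
    (h : Q.totalDegree = 0) (z : Fin n → ℝ) : eval z Q ≠ 0 := by
  classical
  have hsub : Q.support ⊆ {0} := by
    intro v hv
    have hv0 := (totalDegree_eq_zero_iff _ Q).1 h v hv
    simp only [Finset.mem_singleton]
    ext k
    simpa using hv0 k
  have hne : Q.support.Nonempty :=
    Finset.nonempty_iff_ne_empty.2 fun he => hQ (support_eq_empty.1 he)
  have hsupp : Q.support = {0} := by
    refine Finset.Subset.antisymm hsub (Finset.singleton_subset_iff.2 ?_)
    obtain ⟨v, hv⟩ := hne
    have hv' := hsub hv
    simp only [Finset.mem_singleton] at hv'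
    rwa [← hv']
  have h0 : coeff 0 Q ≠ 0 := mem_support_iff.1 (by rw [hsupp]; exact Finset.mem_singleton_self 0)
  have heval : eval z Q = coeff 0 Q := by
    conv_lhs => rw [Q.as_sum]
    rw [map_sum, hsupp, Finset.sum_singleton, eval_monomial]
    simp
  rw [heval]; exact h0

lemma exists_degreeOf_ne_zero {Q : MvPolynomial (Fin n) ℝ} (h : Q.totalDegree ≠ 0) :
    ∃ i, degreeOf i Q ≠ 0 := by
  by_contra hc
  push_neg at hc
  apply h
  rw [totalDegree_eq_zero_iff]
  intro m hm x
  have h2 : m x ≤ degreeOf x Q := by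
    rw [degreeOf_eq_sup]; exact Finset.le_sup (f := fun m => m x) hm
  have h3 := hc x
  omega

lemma exists_DD_eval_ne_zero : ∀ (D : ℕ) (Q : MvPolynomial (Fin n) ℝ), MA Q → Q ≠ 0 →
    Q.totalDegree ≤ D → ∀ z : Fin n → ℝ, ∃ S : Finset (Fin n), eval z (DD S Q) ≠ 0 := by
  intro D
  induction D with
  | zero =>
    intro Q hma hQ hdeg z
    exact ⟨∅, by simpa using eval_ne_zero_of_totalDegree_eq_zero hQ (Nat.le_zero.1 hdeg) z⟩
  | succ D ih =>
    intro Q hma hQ hdeg z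
    rcases Nat.eq_zero_or_pos Q.totalDegree with h0 | hpos
    · exact ⟨∅, by simpa using eval_ne_zero_of_totalDegree_eq_zero hQ h0 z⟩
    · obtain ⟨i, hi⟩ := exists_degreeOf_ne_zero (Q := Q) (by omega)
      have hpne : pderiv i Q ≠ 0 := pderiv_ne_zero hma hi
      have hdeg' : (pderiv i Q).totalDegree ≤ D := by
        have h4 := totalDegree_pderiv_lt hpne
        have h5 : Q.totalDegree ≤ D + 1 := hdeg
        omega
      obtain ⟨S, hS⟩ := ih (pderiv i Q) (hma.pderiv_ma i) hpne hdeg' z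
      refine ⟨insert i S, ?_⟩
      have hiS : i ∉ S := by
        intro hiS
        apply hS
        rw [DD_erase hiS]
        have hz : pderiv i (pderiv i Q) = 0 :=
          pderiv_eq_zero_of_degreeOf_eq_zero (degreeOf_pderiv_self (hma i))
        rw [hz, DD_zero]
        simp
      rw [DD_insert' hiS]
      exact hS

section Topology

open Set

variable {E F : Type*} [TopologicalSpace E] [TopologicalSpace F]

/-- the set of connected components of a set -/
def compsOf (Y : Set E) : Set (Set E) := {K | ∃ x ∈ Y, K = connectedComponentIn Y x}

lemma compsOf_nonempty {Y K : Set E} (hK : K ∈ compsOf Y) : K.Nonempty := by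
  obtain ⟨x, hx, rfl⟩ := hK
  exact ⟨x, mem_connectedComponentIn hx⟩

lemma compsOf_empty : compsOf (∅ : Set E) = ∅ := by
  ext K
  simp [compsOf]

open Classical in
noncomputable def compMap (f : E → F) (Y₂ : Set F) : Set E → Set F :=
  fun K => if h : K.Nonempty then connectedComponentIn Y₂ (f h.some) else ∅

/-- transfer lemma: if every component of `Y₂` is hit by the continuous image of `Y₁`,
the number of components of `Y₂` is at most that of `Y₁`. -/
lemma comps_le {Y₁ : Set E} {Y₂ : Set F} {f : E → F}
    (hf : ContinuousOn f Y₁) (him : Set.MapsTo f Y₁ Y₂)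
    (hmeet : ∀ y ∈ Y₂, ∃ x ∈ Y₁, f x ∈ connectedComponentIn Y₂ y)
    (hfin : (compsOf Y₁).Finite) {N : ℕ} (hN : (compsOf Y₁).ncard ≤ N) :
    (compsOf Y₂).Finite ∧ (compsOf Y₂).ncard ≤ N := by
  have hsurj : compsOf Y₂ ⊆ (compMap f Y₂) '' (compsOf Y₁) := by
    rintro C ⟨y, hy, rfl⟩
    obtain ⟨x, hx, hfx⟩ := hmeet y hy
    refine ⟨connectedComponentIn Y₁ x, ⟨x, hx, rfl⟩, ?_⟩
    have hne : (connectedComponentIn Y₁ x).Nonempty := ⟨x, mem_connectedComponentIn hx⟩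
    classical
    simp only [compMap]
    rw [dif_pos hne]
    have hpc : IsPreconnected (f '' (connectedComponentIn Y₁ x)) :=
      isPreconnected_connectedComponentIn.image f (hf.mono (connectedComponentIn_subset _ _))
    have hsubY₂ : f '' (connectedComponentIn Y₁ x) ⊆ Y₂ := by
      rintro _ ⟨w, hw, rfl⟩
      exact him (connectedComponentIn_subset _ _ hw)
    have hmem : f x ∈ f '' (connectedComponentIn Y₁ x) :=
      ⟨x, mem_connectedComponentIn hx, rfl⟩
    have hsub := hpc.subset_connectedComponentIn hmem hsubY₂
    have he : connectedComponentIn Y₂ (f x) = connectedComponentIn Y₂ y :=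
      (connectedComponentIn_eq hfx).symm
    have hsome : f hne.some ∈ connectedComponentIn Y₂ y :=
      he ▸ hsub ⟨hne.some, hne.some_mem, rfl⟩
    exact (connectedComponentIn_eq hsome).symm
  have hfinim : ((compMap f Y₂) '' (compsOf Y₁)).Finite := hfin.image _
  refine ⟨hfinim.subset hsurj, ?_⟩
  calc (compsOf Y₂).ncard ≤ ((compMap f Y₂) '' (compsOf Y₁)).ncard :=
        Set.ncard_le_ncard hsurj hfinim
    _ ≤ (compsOf Y₁).ncard := Set.ncard_image_le hfin
    _ ≤ N := hN

lemma connectedComponentIn_mono' {U V : Set E} (h : U ⊆ V) {x : E} (hx : x ∈ U) :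
    connectedComponentIn U x ⊆ connectedComponentIn V x :=
  isPreconnected_connectedComponentIn.subset_connectedComponentIn
    (mem_connectedComponentIn hx) ((connectedComponentIn_subset _ _).trans h)

/-- components of a disjoint union of two open sets -/
lemma compsOf_union_subset {U V : Set E} (hU : IsOpen U) (hV : IsOpen V)
    (hd : Disjoint U V) : compsOf (U ∪ V) ⊆ compsOf U ∪ compsOf V := by
  have key : ∀ x ∈ U, connectedComponentIn (U ∪ V) x = connectedComponentIn U x := by
    intro x hx
    have hK : IsPreconnected (connectedComponentIn (U ∪ V) x) :=
      isPreconnected_connectedComponentIn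
    have hKsub : connectedComponentIn (U ∪ V) x ⊆ U ∪ V := connectedComponentIn_subset _ _
    have hKU : connectedComponentIn (U ∪ V) x ⊆ U := by
      by_contra hc
      obtain ⟨z, hz, hzU⟩ := Set.not_subset.1 hc
      have hzV : z ∈ V := (hKsub hz).resolve_left hzU
      obtain ⟨w, hw⟩ := hK U V hU hV hKsub
        ⟨x, mem_connectedComponentIn (Set.mem_union_left _ hx), hx⟩ ⟨z, hz, hzV⟩
      exact Set.disjoint_iff.1 hd ⟨hw.2.1, hw.2.2⟩
    exact Set.Subset.antisymm
      (hK.subset_connectedComponentIn (mem_connectedComponentIn (Set.mem_union_left _ hx)) hKU)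
      (connectedComponentIn_mono' Set.subset_union_left hx)
  have key' : ∀ x ∈ V, connectedComponentIn (U ∪ V) x = connectedComponentIn V x := by
    intro x hx
    have hK : IsPreconnected (connectedComponentIn (U ∪ V) x) :=
      isPreconnected_connectedComponentIn
    have hKsub : connectedComponentIn (U ∪ V) x ⊆ U ∪ V := connectedComponentIn_subset _ _
    have hKV : connectedComponentIn (U ∪ V) x ⊆ V := by
      by_contra hc
      obtain ⟨z, hz, hzV⟩ := Set.not_subset.1 hc
      have hzU : z ∈ U := (hKsub hz).resolve_right hzV
      obtain ⟨w, hw⟩ := hK U V hU hV hKsub ⟨z, hz, hzU⟩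
        ⟨x, mem_connectedComponentIn (Set.mem_union_right _ hx), hx⟩
      exact Set.disjoint_iff.1 hd ⟨hw.2.1, hw.2.2⟩
    exact Set.Subset.antisymm
      (hK.subset_connectedComponentIn (mem_connectedComponentIn (Set.mem_union_right _ hx)) hKV)
      (connectedComponentIn_mono' Set.subset_union_right hx)
  rintro K ⟨x, hx, rfl⟩
  rcases hx with hxU | hxV
  · exact Or.inl ⟨x, hxU, (key x hxU).symm ▸ rfl⟩
  · exact Or.inr ⟨x, hxV, (key' x hxV).symm ▸ rfl⟩

end Topology

lemma isOpen_ccIn {U : Set (Fin n → ℝ)} (hU : IsOpen U) (x : Fin n → ℝ) :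
    IsOpen (connectedComponentIn U x) := by
  rw [Metric.isOpen_iff]
  intro y hy
  obtain ⟨ε, hε, hball⟩ := Metric.isOpen_iff.1 hU y (connectedComponentIn_subset _ _ hy)
  refine ⟨ε, hε, ?_⟩
  have hconn : IsPreconnected (Metric.ball y ε) := (convex_ball y ε).isPreconnected
  have hsub : Metric.ball y ε ⊆ connectedComponentIn U y :=
    hconn.subset_connectedComponentIn (Metric.mem_ball_self hε) hball
  rwa [← connectedComponentIn_eq hy] at hsub

lemma compsOf_univ_subset : compsOf (Set.univ : Set (Fin n → ℝ)) ⊆ {Set.univ} := by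
  rintro K ⟨x, -, rfl⟩
  simp only [Set.mem_singleton_iff, connectedComponentIn_univ]
  exact PreconnectedSpace.connectedComponent_eq_univ x

lemma dist_update_le (z : Fin n → ℝ) (j : Fin n) (t : ℝ) (r : ℝ) (hr : 0 ≤ r)
    (h : |t - z j| ≤ r) : dist (Function.update z j t) z ≤ r := by
  rw [dist_pi_le_iff hr]
  intro k
  by_cases hk : k = j
  · subst hk; simpa [Real.dist_eq] using h
  · simp [Function.update_of_ne hk, hr]

lemma near_point_eval_ne_zero : ∀ (k : ℕ) (S : Finset (Fin n)) (Q : MvPolynomial (Fin n) ℝ),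
    MA Q → S.card ≤ k → ∀ (z : Fin n → ℝ) (ε : ℝ), 0 < ε → eval z (DD S Q) ≠ 0 →
    ∃ x, dist x z < ε ∧ eval x Q ≠ 0 := by
  intro k
  induction k with
  | zero =>
    intro S Q hma hcard z ε hε hne
    have hS : S = ∅ := Finset.card_eq_zero.1 (Nat.le_zero.1 hcard)
    subst hS
    rw [DD_empty] at hne
    exact ⟨z, by simpa using hε, hne⟩
  | succ k ih =>
    intro S Q hma hcard z ε hε hne
    rcases Finset.eq_empty_or_nonempty S with rfl | ⟨j, hj⟩
    · rw [DD_empty] at hne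
      exact ⟨z, by simpa using hε, hne⟩
    · set R := DD (S.erase j) Q with hR
      have hRma : MA R := DD_ma hma
      have hslope : eval z (pderiv j R) ≠ 0 := by
        rw [← DD_erase' hj] at *
        exact hne
      set a := eval z R with ha
      set b := eval z (pderiv j R) with hb
      have hεhalf : (0:ℝ) < ε / 2 := by linarith
      -- choose a shift δ with 0 < |δ| ≤ ε/2 and a + δ * b ≠ 0
      obtain ⟨δ, hδ1, hδ2⟩ : ∃ δ : ℝ, |δ| ≤ ε / 2 ∧ a + δ * b ≠ 0 := by
        by_cases hcase : a + (ε / 2) * b ≠ 0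
        · exact ⟨ε / 2, by rw [abs_of_pos hεhalf], hcase⟩
        · push_neg at hcase
          refine ⟨ε / 4, by rw [abs_of_pos (by linarith)]; linarith, ?_⟩
          intro hzero
          apply hslope
          have : (ε / 2 - ε / 4) * b = 0 := by linarith
          have hb0 : b = 0 := by
            rcases mul_eq_zero.1 this with h | h
            · linarith
            · exact h
          exact hb0
      set z' := Function.update z j (z j + δ) with hz'
      have heval' : eval z' R ≠ 0 := by
        rw [hz', eval_update_affine (hRma j)]
        simpa using hδ2
      have hcard' : (S.erase j).card ≤ k := by
        have := Finset.card_erase_of_mem hj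
        omega
      obtain ⟨x, hx1, hx2⟩ := ih (S.erase j) Q hma hcard' z' (ε / 2) hεhalf heval'
      refine ⟨x, ?_, hx2⟩
      have hdz : dist z' z ≤ ε / 2 := dist_update_le z j (z j + δ) (ε / 2) (le_of_lt hεhalf)
        (by simpa using hδ1)
      calc dist x z ≤ dist x z' + dist z' z := dist_triangle _ _ _
        _ < ε / 2 + ε / 2 := by linarith
        _ = ε := by ring

lemma dense_eval_ne_zero {Q : MvPolynomial (Fin n) ℝ} (hma : MA Q) (hQ : Q ≠ 0) :
    Dense {x : Fin n → ℝ | eval x Q ≠ 0} := by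
  rw [Metric.dense_iff]
  intro z r hr
  obtain ⟨S, hS⟩ := exists_DD_eval_ne_zero Q.totalDegree Q hma hQ le_rfl z
  obtain ⟨x, hx, hxne⟩ := near_point_eval_ne_zero S.card S Q hma le_rfl z r hr hS
  exact ⟨x, Metric.mem_ball.2 hx, hxne⟩

lemma continuousOn_update {s : Set (Fin n → ℝ)} {g : (Fin n → ℝ) → ℝ} (i : Fin n)
    (hg : ContinuousOn g s) :
    ContinuousOn (fun x => Function.update x i (g x)) s := by
  rw [continuousOn_pi]
  intro k
  by_cases hk : k = i
  · subst hk
    simpa using hg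
  · have : (fun x : Fin n → ℝ => Function.update x i (g x) k) = fun x => x k := by
      funext x; rw [Function.update_of_ne hk]
    rw [this]
    exact (continuous_apply k).continuousOn

lemma eval_neg (Q : MvPolynomial (Fin n) ℝ) (x : Fin n → ℝ) : eval x (-Q) = - eval x Q := by
  simp

lemma degreeOf_neg (i : Fin n) (Q : MvPolynomial (Fin n) ℝ) : degreeOf i (-Q) = degreeOf i Q := by
  rw [degreeOf_eq_sup, degreeOf_eq_sup, support_neg]

lemma totalDegree_neg (Q : MvPolynomial (Fin n) ℝ) : totalDegree (-Q) = totalDegree Q := by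
  rw [totalDegree, totalDegree, support_neg]

lemma eval_const_of_totalDegree_eq_zero {Q : MvPolynomial (Fin n) ℝ} (h : Q.totalDegree = 0)
    (z : Fin n → ℝ) : eval z Q = coeff 0 Q := by
  classical
  rcases eq_or_ne Q 0 with rfl | hQ
  · simp
  · have hsub : Q.support ⊆ {0} := by
      intro v hv
      have hv0 := (totalDegree_eq_zero_iff _ Q).1 h v hv
      simp only [Finset.mem_singleton]
      ext k
      simpa using hv0 k
    have hne : Q.support.Nonempty :=
      Finset.nonempty_iff_ne_empty.2 fun he => hQ (support_eq_empty.1 he)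
    have hsupp : Q.support = {0} := by
      refine Finset.Subset.antisymm hsub (Finset.singleton_subset_iff.2 ?_)
      obtain ⟨v, hv⟩ := hne
      have hv' := hsub hv
      simp only [Finset.mem_singleton] at hv'
      rwa [← hv']
    conv_lhs => rw [Q.as_sum]
    rw [map_sum, hsupp, Finset.sum_singleton, eval_monomial]
    simp

/-- components of the set where a constant-or-smaller polynomial is positive -/
lemma sign_comps_const {Q : MvPolynomial (Fin n) ℝ} (h : Q.totalDegree = 0) :
    (compsOf {x : Fin n → ℝ | 0 < eval x Q}).Finite ∧
      (compsOf {x : Fin n → ℝ | 0 < eval x Q}).ncard ≤ 1 := by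
  rcases lt_or_ge 0 (coeff 0 Q) with hc | hc
  · have hset : {x : Fin n → ℝ | 0 < eval x Q} = Set.univ := by
      ext x; simp [eval_const_of_totalDegree_eq_zero h, hc]
    rw [hset]
    refine ⟨(Set.finite_singleton Set.univ).subset compsOf_univ_subset, ?_⟩
    calc (compsOf (Set.univ : Set (Fin n → ℝ))).ncard
        ≤ ({Set.univ} : Set (Set (Fin n → ℝ))).ncard :=
          Set.ncard_le_ncard compsOf_univ_subset (Set.finite_singleton _)
      _ = 1 := Set.ncard_singleton _
  · have hset : {x : Fin n → ℝ | 0 < eval x Q} = ∅ := by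
      ext x
      simp only [Set.mem_setOf_eq, Set.mem_empty_iff_false, iff_false, not_lt]
      rw [eval_const_of_totalDegree_eq_zero h]
      exact hc
    rw [hset, compsOf_empty]
    simp

lemma continuous_update {g : (Fin n → ℝ) → ℝ} (i : Fin n) (hg : Continuous g) :
    Continuous fun x => Function.update x i (g x) := by
  apply continuous_pi
  intro k
  by_cases hk : k = i
  · subst hk
    simpa using hg
  · have : (fun x : Fin n → ℝ => Function.update x i (g x) k) = fun x => x k := by
      funext x; rw [Function.update_of_ne hk]
    rw [this]
    exact continuous_apply k

/-- main graph-correspondence step: over the region where the derivative `A` has a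
fixed sign, the positivity region of `Q` has at most as many components as the region
`{0 < s * A}` itself. -/
lemma comps_side_le {Q A : MvPolynomial (Fin n) ℝ} {i : Fin n} (hQi : degreeOf i Q ≤ 1)
    (hAeq : A = pderiv i Q) (hAi : degreeOf i A = 0) {s : ℝ} (hs : s = 1 ∨ s = -1)
    {N : ℕ} (hfin : (compsOf {x : Fin n → ℝ | 0 < s * eval x A}).Finite)
    (hN : (compsOf {x : Fin n → ℝ | 0 < s * eval x A}).ncard ≤ N) :
    (compsOf ({x : Fin n → ℝ | 0 < eval x Q} ∩ {x | 0 < s * eval x A})).Finite ∧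
      (compsOf ({x : Fin n → ℝ | 0 < eval x Q} ∩ {x | 0 < s * eval x A})).ncard ≤ N := by
  have hs2 : s * s = 1 := by rcases hs with rfl | rfl <;> norm_num
  have hsne : s ≠ 0 := by rcases hs with rfl | rfl <;> norm_num
  set α : (Fin n → ℝ) → ℝ := fun x => eval x A with hα
  set β : (Fin n → ℝ) → ℝ := fun x => eval (Function.update x i 0) Q with hβ
  have hαc : Continuous α := continuous_eval A
  have hβc : Continuous β := (continuous_eval Q).comp (continuous_update i continuous_const)
  have hαupd : ∀ x t, α (Function.update x i t) = α x := by
    intro x t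
    exact eval_indep hAi x t
  have hβupd : ∀ x t, β (Function.update x i t) = β x := by
    intro x t
    show eval (Function.update (Function.update x i t) i 0) Q = eval (Function.update x i 0) Q
    rw [Function.update_idem]
  have hkey : ∀ (x : Fin n → ℝ) (t : ℝ), eval (Function.update x i t) Q = β x + t * α x := by
    intro x t
    have h1 : Function.update (Function.update x i 0) i t = Function.update x i t :=
      Function.update_idem _ _ _
    have h2 := eval_update_affine hQi (Function.update x i 0) t
    rw [h1] at h2
    rw [h2]
    have h3 : Function.update x i 0 i = 0 := Function.update_self _ _ _
    have h4 : eval (Function.update x i 0) (pderiv i Q) = eval x (pderiv i Q) := by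
      rw [← hAeq]
      exact eval_indep hAi x 0
    rw [h3, h4, ← hAeq]
    show β x + (t - 0) * α x = β x + t * α x
    ring
  have hevalx : ∀ x : Fin n → ℝ, eval x Q = β x + x i * α x := by
    intro x
    conv_lhs => rw [show x = Function.update x i (x i) from (Function.update_eq_self i x).symm]
    exact hkey x (x i)
  set T := ({x : Fin n → ℝ | 0 < eval x Q} ∩ {x | 0 < s * eval x A}) with hT
  set M := ({x : Fin n → ℝ | 0 < s * eval x A} ∩ {x | 0 < s * x i}) with hM
  set W := {x : Fin n → ℝ | 0 < s * eval x A} with hW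
  -- step 2 first : comps of M ≤ comps of W
  have step2 : (compsOf M).Finite ∧ (compsOf M).ncard ≤ N := by
    refine comps_le (f := fun x => Function.update x i (s * Real.exp (x i))) ?_ ?_ ?_ hfin hN
    · exact (continuous_update i (continuous_const.mul ((Real.continuous_exp).comp
        (continuous_apply i)))).continuousOn
    · intro x hx
      constructor
      · show 0 < s * α (Function.update x i (s * Real.exp (x i)))
        rw [hαupd]
        exact hx
      · show 0 < s * (Function.update x i (s * Real.exp (x i)) i)
        rw [Function.update_self]
        have : s * (s * Real.exp (x i)) = Real.exp (x i) := by
          rw [← mul_assoc, hs2, one_mul]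
        rw [this]
        exact Real.exp_pos _
    · intro y hy
      obtain ⟨hy1, hy2⟩ := hy
      refine ⟨Function.update y i (Real.log (s * y i)), ?_, ?_⟩
      · show 0 < s * α (Function.update y i (Real.log (s * y i)))
        rw [hαupd]
        exact hy1
      · have hval : Function.update (Function.update y i (Real.log (s * y i))) i
            (s * Real.exp ((Function.update y i (Real.log (s * y i))) i)) = y := by
          rw [Function.update_self, Function.update_idem, Real.exp_log hy2]
          rw [← mul_assoc, hs2, one_mul]
          exact Function.update_eq_self i y
        have hmem : y ∈ connectedComponentIn M y := mem_connectedComponentIn ⟨hy1, hy2⟩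
        show Function.update (Function.update y i (Real.log (s * y i))) i
            (s * Real.exp ((Function.update y i (Real.log (s * y i))) i)) ∈ connectedComponentIn M y
        rw [hval]
        exact hmem
  -- step 1 : comps of T ≤ comps of M
  refine comps_le (f := fun x => Function.update x i (x i - β x / α x)) ?_ ?_ ?_ step2.1 step2.2
  · apply continuousOn_update
    exact ((continuous_apply i).continuousOn).sub
      (hβc.continuousOn.div hαc.continuousOn (fun x hx => by
        intro h0
        have h6 : 0 < s * α x := hx.1
        rw [h0, mul_zero] at h6
        exact lt_irrefl 0 h6))
  · intro x hx
    obtain ⟨hx1, hx2⟩ := hx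
    have hαne : α x ≠ 0 := by
      intro h0
      have h6 : 0 < s * α x := hx1
      rw [h0, mul_zero] at h6
      exact lt_irrefl 0 h6
    constructor
    · show 0 < eval (Function.update x i (x i - β x / α x)) Q
      rw [hkey]
      have : β x + (x i - β x / α x) * α x = x i * α x := by
        field_simp
        ring
      rw [this]
      have h5 : 0 < (s * x i) * (s * α x) := mul_pos hx2 hx1
      calc (0:ℝ) < (s * x i) * (s * α x) := h5
        _ = (s * s) * (x i * α x) := by ring
        _ = x i * α x := by rw [hs2, one_mul]
    · show 0 < s * α (Function.update x i (x i - β x / α x))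
      rw [hαupd]
      exact hx1
  · intro y hy
    obtain ⟨hy1, hy2⟩ := hy
    have hαne : α y ≠ 0 := by
      intro h0
      have h6 : 0 < s * α y := hy2
      rw [h0, mul_zero] at h6
      exact lt_irrefl 0 h6
    refine ⟨Function.update y i (y i + β y / α y), ⟨?_, ?_⟩, ?_⟩
    · show 0 < s * α (Function.update y i (y i + β y / α y))
      rw [hαupd]
      exact hy2
    · show 0 < s * (Function.update y i (y i + β y / α y)) i
      rw [Function.update_self]
      have hQy : 0 < eval y Q := hy1
      rw [hevalx y] at hQy
      have hcalc : s * (y i + β y / α y) = (β y + y i * α y) * ((s * α y) / (α y * α y)) := by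
        field_simp
        ring
      rw [hcalc]
      apply mul_pos hQy
      apply div_pos hy2
      exact mul_self_pos.2 hαne
    · have hβy : β (Function.update y i (y i + β y / α y)) = β y := hβupd _ _
      have hαy : α (Function.update y i (y i + β y / α y)) = α y := hαupd _ _
      have hval : Function.update (Function.update y i (y i + β y / α y)) i
          ((Function.update y i (y i + β y / α y)) i
            - β (Function.update y i (y i + β y / α y)) / α (Function.update y i (y i + β y / α y))) = y := by
        rw [Function.update_self, hβy, hαy, Function.update_idem]
        have : y i + β y / α y - β y / α y = y i := by ring
        rw [this]
        exact Function.update_eq_self i y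
      have hmem : y ∈ connectedComponentIn T y := mem_connectedComponentIn ⟨hy1, hy2⟩
      show Function.update (Function.update y i (y i + β y / α y)) i
          ((Function.update y i (y i + β y / α y)) i
            - β (Function.update y i (y i + β y / α y)) / α (Function.update y i (y i + β y / α y)))
          ∈ connectedComponentIn T y
      rw [hval]
      exact hmem

/-- bound on components of a region where the polynomial is positive after
intersecting with a sign region of `A`, in the constant-`A` case -/
lemma comps_W_const {A : MvPolynomial (Fin n) ℝ} (hdeg0 : A.totalDegree = 0) (s : ℝ)
    (hpos : 0 < s * coeff 0 A) :
    (compsOf {x : Fin n → ℝ | 0 < s * eval x A}).Finite ∧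
      (compsOf {x : Fin n → ℝ | 0 < s * eval x A}).ncard ≤ 1 := by
  have hset : {x : Fin n → ℝ | 0 < s * eval x A} = Set.univ := by
    ext x
    simp [eval_const_of_totalDegree_eq_zero hdeg0, hpos]
  rw [hset]
  refine ⟨(Set.finite_singleton Set.univ).subset compsOf_univ_subset, ?_⟩
  calc (compsOf (Set.univ : Set (Fin n → ℝ))).ncard
      ≤ ({Set.univ} : Set (Set (Fin n → ℝ))).ncard :=
        Set.ncard_le_ncard compsOf_univ_subset (Set.finite_singleton _)
    _ = 1 := Set.ncard_singleton _

lemma comps_W_const_empty {A : MvPolynomial (Fin n) ℝ} (hdeg0 : A.totalDegree = 0) (s : ℝ)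
    (hneg : s * coeff 0 A ≤ 0) :
    (compsOf {x : Fin n → ℝ | 0 < s * eval x A}).Finite ∧
      (compsOf {x : Fin n → ℝ | 0 < s * eval x A}).ncard ≤ 0 := by
  have hset : {x : Fin n → ℝ | 0 < s * eval x A} = ∅ := by
    ext x
    simp only [Set.mem_setOf_eq, Set.mem_empty_iff_false, iff_false, not_lt]
    rw [eval_const_of_totalDegree_eq_zero hdeg0]
    exact hneg
  rw [hset, compsOf_empty]
  simp

/-- Main sign-region bound: a nonzero multiaffine polynomial of total degree at most `e`
has at most `2 ^ (e-1)` connected components in its positivity region. -/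
theorem sign_comps_bound : ∀ (e : ℕ) (Q : MvPolynomial (Fin n) ℝ), MA Q → Q ≠ 0 →
    Q.totalDegree ≤ e →
    (compsOf {x : Fin n → ℝ | 0 < eval x Q}).Finite ∧
      (compsOf {x : Fin n → ℝ | 0 < eval x Q}).ncard ≤ 2 ^ (e - 1) := by
  intro e
  induction e with
  | zero =>
    intro Q hma hQ hdeg
    obtain ⟨h1, h2⟩ := sign_comps_const (Nat.le_zero.1 hdeg)
    exact ⟨h1, le_trans h2 Nat.one_le_two_pow⟩
  | succ e ih =>
    intro Q hma hQ hdeg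
    rcases Nat.eq_zero_or_pos Q.totalDegree with h0 | hposdeg
    · obtain ⟨h1, h2⟩ := sign_comps_const h0
      exact ⟨h1, le_trans h2 Nat.one_le_two_pow⟩
    obtain ⟨i, hi⟩ := exists_degreeOf_ne_zero (Q := Q) (by omega)
    have hAne : pderiv i Q ≠ 0 := pderiv_ne_zero hma hi
    have hAma : MA (pderiv i Q) := hma.pderiv_ma i
    have hdegAi : degreeOf i (pderiv i Q) = 0 := degreeOf_pderiv_self (hma i)
    set A := pderiv i Q with hA
    -- per-side bounds
    have hXopen : IsOpen {x : Fin n → ℝ | 0 < eval x Q} :=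
      isOpen_lt continuous_const (continuous_eval Q)
    have hsideopen : ∀ s : ℝ, IsOpen {x : Fin n → ℝ | 0 < s * eval x A} := fun s =>
      isOpen_lt continuous_const (continuous_const.mul (continuous_eval A))
    obtain ⟨Np, Nm, hWp, hWm, hsum⟩ :
        ∃ Np Nm : ℕ,
          ((compsOf {x : Fin n → ℝ | 0 < (1:ℝ) * eval x A}).Finite ∧
            (compsOf {x : Fin n → ℝ | 0 < (1:ℝ) * eval x A}).ncard ≤ Np) ∧
          ((compsOf {x : Fin n → ℝ | 0 < (-1:ℝ) * eval x A}).Finite ∧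
            (compsOf {x : Fin n → ℝ | 0 < (-1:ℝ) * eval x A}).ncard ≤ Nm) ∧
          Np + Nm ≤ 2 ^ e := by
      rcases Nat.eq_zero_or_pos A.totalDegree with hconst | hApos
      · -- constant A
        have hc : coeff 0 A ≠ 0 := by
          have h7 := eval_ne_zero_of_totalDegree_eq_zero hAne hconst (fun _ => 0)
          rwa [eval_const_of_totalDegree_eq_zero hconst] at h7
        rcases lt_or_gt_of_ne hc with hneg | hpos
        · refine ⟨0, 1, ?_, ?_, ?_⟩
          · exact comps_W_const_empty hconst 1 (by nlinarith)
          · exact comps_W_const hconst (-1) (by nlinarith)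
          · exact Nat.one_le_two_pow
        · refine ⟨1, 0, ?_, ?_, ?_⟩
          · exact comps_W_const hconst 1 (by nlinarith)
          · exact comps_W_const_empty hconst (-1) (by nlinarith)
          · exact Nat.one_le_two_pow
      · -- nonconstant A
        have hAdeg : A.totalDegree ≤ e := by
          have h8 := totalDegree_pderiv_lt hAne
          rw [← hA] at h8
          omega
        have he1 : 1 ≤ e := le_trans hApos hAdeg
        have hset1 : {x : Fin n → ℝ | 0 < (1:ℝ) * eval x A} = {x : Fin n → ℝ | 0 < eval x A} := by
          ext x; simp
        have hset2 : {x : Fin n → ℝ | 0 < (-1:ℝ) * eval x A}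
            = {x : Fin n → ℝ | 0 < eval x (-A)} := by
          ext x
          simp only [Set.mem_setOf_eq, eval_neg]
          constructor <;> intro h <;> linarith
        refine ⟨2 ^ (e - 1), 2 ^ (e - 1), ?_, ?_, ?_⟩
        · rw [hset1]
          exact ih A hAma hAne hAdeg
        · rw [hset2]
          refine ih (-A) (fun j => by rw [degreeOf_neg]; exact hAma j)
            (neg_ne_zero.2 hAne) (by rw [totalDegree_neg]; exact hAdeg)
        · have : 2 ^ (e - 1) + 2 ^ (e - 1) = 2 ^ (e - 1 + 1) := by ring
          rw [this]
          have h9 : e - 1 + 1 = e := by omega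
          rw [h9]
    -- side sets
    have hSp := comps_side_le (hma i) hA hdegAi (Or.inl rfl) hWp.1 hWp.2
    have hSm := comps_side_le (hma i) hA hdegAi (Or.inr rfl) hWm.1 hWm.2
    set Sp := ({x : Fin n → ℝ | 0 < eval x Q} ∩ {x | 0 < (1:ℝ) * eval x A}) with hSpdef
    set Sm := ({x : Fin n → ℝ | 0 < eval x Q} ∩ {x | 0 < (-1:ℝ) * eval x A}) with hSmdef
    have hSpopen : IsOpen Sp := hXopen.inter (hsideopen 1)
    have hSmopen : IsOpen Sm := hXopen.inter (hsideopen (-1))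
    have hdisj : Disjoint Sp Sm := by
      rw [Set.disjoint_left]
      rintro x ⟨-, hx1⟩ ⟨-, hx2⟩
      have h1 : 0 < (1:ℝ) * eval x A := hx1
      have h2 : 0 < (-1:ℝ) * eval x A := hx2
      linarith
    have hYsub : compsOf (Sp ∪ Sm) ⊆ compsOf Sp ∪ compsOf Sm :=
      compsOf_union_subset hSpopen hSmopen hdisj
    have hYfin : (compsOf (Sp ∪ Sm)).Finite := (hSp.1.union hSm.1).subset hYsub
    have hYcard : (compsOf (Sp ∪ Sm)).ncard ≤ 2 ^ e := by
      calc (compsOf (Sp ∪ Sm)).ncard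
          ≤ (compsOf Sp ∪ compsOf Sm).ncard :=
            Set.ncard_le_ncard hYsub (hSp.1.union hSm.1)
        _ ≤ (compsOf Sp).ncard + (compsOf Sm).ncard := Set.ncard_union_le _ _
        _ ≤ Np + Nm := Nat.add_le_add hSp.2 hSm.2
        _ ≤ 2 ^ e := hsum
    -- transfer to X via density
    have hfinal := comps_le (f := fun x : Fin n → ℝ => x) (Y₁ := Sp ∪ Sm)
      (Y₂ := {x : Fin n → ℝ | 0 < eval x Q}) continuousOn_id ?_ ?_ hYfin hYcard
    · obtain ⟨hf1, hf2⟩ := hfinal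
      refine ⟨hf1, ?_⟩
      have h10 : e + 1 - 1 = e := by omega
      rw [h10]
      exact hf2
    · rintro x (hx | hx)
      · exact hx.1
      · exact hx.1
    · intro y hy
      have hCopen : IsOpen (connectedComponentIn {x : Fin n → ℝ | 0 < eval x Q} y) :=
        isOpen_ccIn hXopen y
      have hCne : (connectedComponentIn {x : Fin n → ℝ | 0 < eval x Q} y).Nonempty :=
        ⟨y, mem_connectedComponentIn hy⟩
      obtain ⟨x, hxA, hxC⟩ := (dense_eval_ne_zero hAma hAne).exists_mem_open hCopen hCne
      have hxX : x ∈ {x : Fin n → ℝ | 0 < eval x Q} := connectedComponentIn_subset _ _ hxC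
      refine ⟨x, ?_, hxC⟩
      rcases lt_or_gt_of_ne (hxA : eval x A ≠ 0) with hneg | hpos
      · exact Or.inr ⟨hxX, by show 0 < (-1:ℝ) * eval x A; linarith⟩
      · exact Or.inl ⟨hxX, by show 0 < (1:ℝ) * eval x A; linarith⟩

lemma cc_eq_of_mem {E : Type*} [TopologicalSpace E] {F : Set E} {z z' : E}
    (h : z' ∈ connectedComponentIn F z) :
    connectedComponentIn F z' = connectedComponentIn F z :=
  (connectedComponentIn_eq h).symm

lemma continuousOn_update_curve {s : Set ℝ} {G : ℝ → Fin n → ℝ} {h : ℝ → ℝ} (j : Fin n)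
    (hG : ContinuousOn G s) (hh : ContinuousOn h s) :
    ContinuousOn (fun u => Function.update (G u) j (h u)) s := by
  rw [continuousOn_pi]
  intro k
  by_cases hk : k = j
  · subst hk
    simpa using hh
  · have : (fun u => Function.update (G u) j (h u) k) = fun u => G u k := by
      funext u; rw [Function.update_of_ne hk]
    rw [this]
    exact (continuousOn_pi.1 hG) k

/-- moving along an axis line inside the zero set -/
lemma line_move {P : MvPolynomial (Fin n) ℝ} (hma : MA P) {z : Fin n → ℝ}
    (hz : eval z P = 0) {i : Fin n} (hd : eval z (pderiv i P) = 0) (t : ℝ) :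
    Function.update z i t ∈ connectedComponentIn {x : Fin n → ℝ | eval x P = 0} z ∧
      eval (Function.update z i t) P = 0 := by
  have hzt : ∀ s : ℝ, eval (Function.update z i s) P = 0 := by
    intro s
    rw [eval_update_affine (hma i), hz, hd]
    ring
  have hLsub : Set.range (fun s : ℝ => Function.update z i s)
      ⊆ {x : Fin n → ℝ | eval x P = 0} := by
    rintro _ ⟨s, rfl⟩
    exact hzt s
  have hLconn : IsPreconnected (Set.range (fun s : ℝ => Function.update z i s)) := by
    rw [← Set.image_univ]
    exact isPreconnected_univ.image _
      (continuousOn_update_curve i continuousOn_const continuousOn_id)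
  have hzL : z ∈ Set.range (fun s : ℝ => Function.update z i s) :=
    ⟨z i, Function.update_eq_self i z⟩
  have hsub := hLconn.subset_connectedComponentIn hzL hLsub
  exact ⟨hsub ⟨t, rfl⟩, hzt t⟩

/-- moving along a hyperbola-like curve inside the zero set, in the plane of the
variables `i ≠ j`, changing the `i`-th coordinate by a positive amount -/
lemma curve_move {P : MvPolynomial (Fin n) ℝ} (hma : MA P) {z : Fin n → ℝ}
    (hz : eval z P = 0) {i j : Fin n} (hij : i ≠ j)
    (hb : eval z (pderiv j P) ≠ 0) :
    ∃ δ : ℝ, 0 < δ ∧ ∃ w ∈ connectedComponentIn {x : Fin n → ℝ | eval x P = 0} z,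
      ∃ t : ℝ, w = Function.update (Function.update z i (z i + δ)) j t := by
  set a := eval z (pderiv i P) with ha
  set b := eval z (pderiv j P) with hbdef
  set M := eval z (pderiv i (pderiv j P)) with hM
  have hbpos : 0 < |b| := abs_pos.2 hb
  have hMnn : 0 ≤ |M| := abs_nonneg M
  set δ := |b| / (2 * (|M| + 1)) with hδ
  have hδpos : 0 < δ := div_pos hbpos (by linarith)
  have hden : ∀ u ∈ Set.Icc (0:ℝ) δ, b + u * M ≠ 0 := by
    intro u hu h0
    have hu1 : 0 ≤ u := hu.1
    have hu2 : u ≤ δ := hu.2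
    have h1 : |b| = |u * M| := by
      have : b = -(u * M) := by linarith
      rw [this, abs_neg]
    have h2 : |u * M| ≤ δ * |M| := by
      rw [abs_mul]
      have : |u| = u := abs_of_nonneg hu1
      rw [this]
      exact mul_le_mul_of_nonneg_right hu2 hMnn
    have h3 : δ * |M| ≤ |b| / 2 := by
      rw [hδ]
      rw [div_mul_eq_mul_div]
      rw [div_le_div_iff₀ (by linarith) (by norm_num)]
      nlinarith
    linarith
  set v : ℝ → ℝ := fun u => -(u * a) / (b + u * M) with hv
  set F : ℝ → (Fin n → ℝ) :=
    fun u => Function.update (Function.update z i (z i + u)) j (z j + v u) with hF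
  have hv0 : v 0 = 0 := by
    rw [hv]
    norm_num
  have hF0 : F 0 = z := by
    show Function.update (Function.update z i (z i + 0)) j (z j + v 0) = z
    rw [hv0, add_zero, add_zero, Function.update_eq_self i z, Function.update_eq_self j z]
  have hFZ : ∀ u ∈ Set.Icc (0:ℝ) δ, eval (F u) P = 0 := by
    intro u hu
    have hyj : (Function.update z i (z i + u)) j = z j :=
      Function.update_of_ne (Ne.symm hij) _ _
    have h1 : eval (F u) P = eval (Function.update z i (z i + u)) P
        + (v u) * eval (Function.update z i (z i + u)) (pderiv j P) := by
      rw [hF]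
      rw [eval_update_affine (hma j), hyj]
      ring_nf
    have h2 : eval (Function.update z i (z i + u)) P = u * a := by
      rw [eval_update_affine (hma i), hz, ha]
      ring
    have h3 : eval (Function.update z i (z i + u)) (pderiv j P) = b + u * M := by
      rw [eval_update_affine ((hma.pderiv_ma j) i), hbdef, hM]
      ring
    rw [h1, h2, h3, hv]
    field_simp [hden u hu]
    ring
  have hFcont : ContinuousOn F (Set.Icc (0:ℝ) δ) := by
    apply continuousOn_update_curve
    · apply continuousOn_update_curve
      · exact continuousOn_const
      · exact (continuous_const.add continuous_id).continuousOn
    · refine continuousOn_const.add ?_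
      exact ContinuousOn.div
        ((continuous_id.mul continuous_const).neg).continuousOn
        ((continuous_const.add (continuous_id.mul continuous_const))).continuousOn
        hden
  have hKconn : IsPreconnected (F '' Set.Icc (0:ℝ) δ) :=
    isPreconnected_Icc.image F hFcont
  have hKsub : F '' Set.Icc (0:ℝ) δ ⊆ {x : Fin n → ℝ | eval x P = 0} := by
    rintro _ ⟨u, hu, rfl⟩
    exact hFZ u hu
  have hzK : z ∈ F '' Set.Icc (0:ℝ) δ :=
    ⟨0, Set.mem_Icc.2 ⟨le_refl 0, le_of_lt hδpos⟩, hF0⟩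
  have hsub := hKconn.subset_connectedComponentIn hzK hKsub
  refine ⟨δ, hδpos, F δ, hsub ⟨δ, Set.mem_Icc.2 ⟨le_of_lt hδpos, le_refl δ⟩, rfl⟩,
    z j + v δ, rfl⟩

lemma DD_singleton (i : Fin n) (P : MvPolynomial (Fin n) ℝ) : DD {i} P = pderiv i P := by
  have h : ({i} : Finset (Fin n)) = insert i ∅ := rfl
  rw [h, DD_insert (Finset.notMem_empty i), DD_empty]

/-- the descent: from a point of the zero set carrying a nonvanishing iterated
derivative (over a set containing `ν`), one can move within the connected component
of the zero set to a point where `∂_ν P` itself does not vanish. -/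
lemma descend {P : MvPolynomial (Fin n) ℝ} (hma : MA P) (ν : Fin n) :
    ∀ (k : ℕ) (z : Fin n → ℝ), eval z P = 0 →
    ∀ W : Finset (Fin n), ν ∈ W → W.card ≤ k → eval z (DD W P) ≠ 0 →
    ∃ w ∈ connectedComponentIn {x : Fin n → ℝ | eval x P = 0} z,
      eval w (pderiv ν P) ≠ 0 := by
  intro k
  induction k with
  | zero =>
    intro z hz W hν hcard hW
    have := Finset.card_pos.2 ⟨ν, hν⟩
    omega
  | succ k ih =>
    intro z hz W hν hcard hW
    by_cases hsmall : ∃ S : Finset (Fin n), ν ∈ S ∧ S.card < W.card ∧ eval z (DD S P) ≠ 0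
    · obtain ⟨S, hS1, hS2, hS3⟩ := hsmall
      exact ih z hz S hS1 (by omega) hS3
    push_neg at hsmall
    have hmin : ∀ S : Finset (Fin n), ν ∈ S → S.card < W.card → eval z (DD S P) = 0 := by
      intro S h1 h2
      by_contra h3
      exact h3 (hsmall S h1 h2)
    rcases Nat.lt_or_ge W.card 2 with hc1 | hc2
    · -- card W = 1, so W = {ν} and ∂_ν P (z) ≠ 0 already
      have hcard1 : W.card = 1 := by
        have := Finset.card_pos.2 ⟨ν, hν⟩
        omega
      obtain ⟨a, ha⟩ := Finset.card_eq_one.1 hcard1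
      have haν : a = ν := by
        rw [ha] at hν
        exact (Finset.mem_singleton.1 hν).symm
      subst haν
      rw [ha, DD_singleton] at hW
      exact ⟨z, mem_connectedComponentIn hz, hW⟩
    · -- card W ≥ 2
      have hν1 : eval z (pderiv ν P) = 0 := by
        have := hmin {ν} (Finset.mem_singleton_self ν) (by rw [Finset.card_singleton]; omega)
        rwa [DD_singleton] at this
      by_cases hcasea : ∃ i ∈ W, i ≠ ν ∧ eval z (pderiv i P) = 0
      · -- case (a) : an axis move in direction i
        obtain ⟨i, hiW, hiν, hider⟩ := hcasea
        obtain ⟨hmem, hz1⟩ := line_move hma hz hider (z i + 1)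
        set z₁ := Function.update z i (z i + 1) with hz₁def
        have hT : eval z₁ (DD (W.erase i) P) ≠ 0 := by
          have h1 : eval z₁ (DD (W.erase i) P)
              = eval z (DD (W.erase i) P) + 1 * eval z (pderiv i (DD (W.erase i) P)) := by
            rw [hz₁def, eval_update_affine ((DD_ma hma) i)]
            ring_nf
          have h2 : eval z (DD (W.erase i) P) = 0 := by
            apply hmin
            · exact Finset.mem_erase.2 ⟨Ne.symm hiν, hν⟩
            · have := Finset.card_erase_of_mem hiW
              have := Finset.card_pos.2 ⟨ν, hν⟩
              omega
          have h3 : pderiv i (DD (W.erase i) P) = DD W P := (DD_erase' hiW P).symm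
          rw [h1, h2, h3]
          simpa using hW
        obtain ⟨w, hw1, hw2⟩ := ih z₁ hz1 (W.erase i)
          (Finset.mem_erase.2 ⟨Ne.symm hiν, hν⟩)
          (by have := Finset.card_erase_of_mem hiW; omega) hT
        rw [cc_eq_of_mem hmem] at hw1
        exact ⟨w, hw1, hw2⟩
      · -- case (b) : all i ∈ W \ {ν} have nonvanishing first derivative
        push_neg at hcasea
        have hallne : ∀ i ∈ W, i ≠ ν → eval z (pderiv i P) ≠ 0 := hcasea
        rcases Nat.lt_or_ge W.card 3 with hc2eq | hc3
        · -- card W = 2 : the two-step move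
          have hcard2 : W.card = 2 := by omega
          have hcardE : (W.erase ν).card = 1 := by
            have := Finset.card_erase_of_mem hν
            omega
          obtain ⟨i, hi⟩ := Finset.card_eq_one.1 hcardE
          have hiW : i ∈ W ∧ i ≠ ν := by
            have : i ∈ W.erase ν := by rw [hi]; exact Finset.mem_singleton_self i
            exact ⟨Finset.mem_of_mem_erase this, (Finset.mem_erase.1 this).1⟩
          have hWeq : W = insert ν {i} := by
            rw [← hi, Finset.insert_erase hν]
          have hDDW : DD W P = pderiv ν (pderiv i P) := by
            rw [hWeq, DD_insert (by simp [Ne.symm hiW.2]), DD_singleton]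
          set D := eval z (pderiv ν (pderiv i P)) with hD
          have hDne : D ≠ 0 := by
            rw [hD, ← hDDW]
            exact hW
          set aa := eval z (pderiv i P) with haa
          have haane : aa ≠ 0 := hallne i hiW.1 hiW.2
          -- first move : along ν to kill ∂_i P
          obtain ⟨hmem1, hz'⟩ := line_move hma hz hν1 (z ν - aa / D)
          set z' := Function.update z ν (z ν - aa / D) with hz'def
          have hz'i : eval z' (pderiv i P) = 0 := by
            rw [hz'def, eval_update_affine ((hma.pderiv_ma i) ν)]
            have h4 : eval z (pderiv ν (pderiv i P)) = D := rfl
            rw [h4, ← haa]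
            field_simp
            ring
          -- second move : along i
          obtain ⟨hmem2, hw2⟩ := line_move hma hz' hz'i (z' i + 1)
          set w := Function.update z' i (z' i + 1) with hwdef
          refine ⟨w, ?_, ?_⟩
          · rw [cc_eq_of_mem hmem1] at hmem2
            exact hmem2
          · have h5 : eval w (pderiv ν P)
                = eval z' (pderiv ν P) + 1 * eval z' (pderiv i (pderiv ν P)) := by
              rw [hwdef, eval_update_affine ((hma.pderiv_ma ν) i)]
              ring_nf
            have h6 : eval z' (pderiv ν P) = eval z (pderiv ν P) := by
              rw [hz'def]
              exact eval_indep (degreeOf_pderiv_self (hma ν)) z _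
            have h7 : eval z' (pderiv i (pderiv ν P)) = eval z (pderiv i (pderiv ν P)) := by
              rw [hz'def]
              apply eval_indep
              have h8 : degreeOf ν (pderiv ν P) = 0 := degreeOf_pderiv_self (hma ν)
              have h9 := degreeOf_pderiv_le i ν (pderiv ν P)
              omega
            have h10 : eval z (pderiv i (pderiv ν P)) = D := by
              rw [hD, pderiv_comm]
            rw [h5, h6, h7, h10, hν1]
            simpa using hDne
        · -- card W ≥ 3 : the curve move
          have hcardE2 : 2 ≤ (W.erase ν).card := by
            have := Finset.card_erase_of_mem hν
            omega
          obtain ⟨i, hi, j, hj, hij⟩ := Finset.one_lt_card.1 (by omega : 1 < (W.erase ν).card)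
          have hiW : i ∈ W := Finset.mem_of_mem_erase hi
          have hiν : i ≠ ν := (Finset.mem_erase.1 hi).1
          have hjW : j ∈ W := Finset.mem_of_mem_erase hj
          have hjν : j ≠ ν := (Finset.mem_erase.1 hj).1
          have hbne : eval z (pderiv j P) ≠ 0 := hallne j hjW hjν
          obtain ⟨δ, hδpos, w₀, hw₀mem, t, hw₀eq⟩ := curve_move hma hz hij hbne
          have hw₀Z : eval w₀ P = 0 :=
            connectedComponentIn_subset {x : Fin n → ℝ | eval x P = 0} z hw₀mem
          have hT : eval w₀ (DD (W.erase i) P) ≠ 0 := by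
            have hjmem : j ∈ W.erase i := Finset.mem_erase.2 ⟨Ne.symm hij, hjW⟩
            have hdegj : degreeOf j (DD (W.erase i) P) = 0 := DD_degreeOf_zero hma hjmem
            have h1 : eval w₀ (DD (W.erase i) P)
                = eval (Function.update z i (z i + δ)) (DD (W.erase i) P) := by
              rw [hw₀eq]
              exact eval_indep hdegj _ _
            have h2 : eval (Function.update z i (z i + δ)) (DD (W.erase i) P)
                = eval z (DD (W.erase i) P) + δ * eval z (pderiv i (DD (W.erase i) P)) := by
              rw [eval_update_affine ((DD_ma hma) i)]
              ring_nf
            have h3 : eval z (DD (W.erase i) P) = 0 := by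
              apply hmin
              · exact Finset.mem_erase.2 ⟨Ne.symm hiν, hν⟩
              · have := Finset.card_erase_of_mem hiW
                have := Finset.card_pos.2 ⟨ν, hν⟩
                omega
            have h4 : pderiv i (DD (W.erase i) P) = DD W P := (DD_erase' hiW P).symm
            rw [h1, h2, h3, h4]
            simp only [zero_add]
            exact mul_ne_zero (ne_of_gt hδpos) hW
          obtain ⟨w, hw1, hw2⟩ := ih w₀ hw₀Z (W.erase i)
            (Finset.mem_erase.2 ⟨Ne.symm hiν, hν⟩)
            (by have := Finset.card_erase_of_mem hiW; omega) hT
          rw [cc_eq_of_mem hw₀mem] at hw1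
          exact ⟨w, hw1, hw2⟩

/-- every connected component of the zero set of a multiaffine polynomial contains a
point where a given nonvanishing partial derivative is nonzero -/
lemma every_comp_meets {P : MvPolynomial (Fin n) ℝ} (hma : MA P) {ν : Fin n}
    (hν : pderiv ν P ≠ 0) {z : Fin n → ℝ} (hz : eval z P = 0) :
    ∃ w ∈ connectedComponentIn {x : Fin n → ℝ | eval x P = 0} z,
      eval w (pderiv ν P) ≠ 0 := by
  obtain ⟨S, hS⟩ := exists_DD_eval_ne_zero (pderiv ν P).totalDegree (pderiv ν P)
    (hma.pderiv_ma ν) hν le_rfl z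
  have hνS : ν ∉ S := by
    intro hνS
    apply hS
    rw [DD_erase hνS]
    have hzz : pderiv ν (pderiv ν P) = 0 :=
      pderiv_eq_zero_of_degreeOf_eq_zero (degreeOf_pderiv_self (hma ν))
    rw [hzz, DD_zero]
    simp
  have heq : DD (insert ν S) P = DD S (pderiv ν P) := DD_insert' hνS P
  exact descend hma ν (insert ν S).card z hz (insert ν S) (Finset.mem_insert_self ν S)
    le_rfl (by rw [heq]; exact hS)

/-- the main bound, in `compsOf` form -/
theorem main_bound (d : ℕ) (hd : 1 ≤ d) (P : MvPolynomial (Fin n) ℝ) (hP : P ≠ 0)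
    (hma : MA P) (hdeg : P.totalDegree ≤ d) :
    (compsOf {x : Fin n → ℝ | eval x P = 0}).Finite ∧
      (compsOf {x : Fin n → ℝ | eval x P = 0}).ncard ≤ 2 ^ (d - 1) := by
  rcases Nat.eq_zero_or_pos P.totalDegree with h0 | hpos
  · -- constant polynomial : empty zero set
    have hempty : {x : Fin n → ℝ | eval x P = 0} = ∅ := by
      ext z
      simp only [Set.mem_setOf_eq, Set.mem_empty_iff_false, iff_false]
      exact eval_ne_zero_of_totalDegree_eq_zero hP h0 z
    rw [hempty, compsOf_empty]
    simp
  · obtain ⟨ν, hν⟩ := exists_degreeOf_ne_zero (Q := P) (by omega)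
    have hAne : pderiv ν P ≠ 0 := pderiv_ne_zero hma hν
    have hAma : MA (pderiv ν P) := hma.pderiv_ma ν
    have hAi : degreeOf ν (pderiv ν P) = 0 := degreeOf_pderiv_self (hma ν)
    set A := pderiv ν P with hA
    set Z := {x : Fin n → ℝ | eval x P = 0} with hZ
    -- affine structure in direction ν
    set α : (Fin n → ℝ) → ℝ := fun x => eval x A with hα
    set β : (Fin n → ℝ) → ℝ := fun x => eval (Function.update x ν 0) P with hβ
    have hαc : Continuous α := continuous_eval A
    have hβc : Continuous β := (continuous_eval P).comp (continuous_update ν continuous_const)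
    have hαupd : ∀ x t, α (Function.update x ν t) = α x := fun x t => eval_indep hAi x t
    have hkey : ∀ (x : Fin n → ℝ) (t : ℝ), eval (Function.update x ν t) P = β x + t * α x := by
      intro x t
      have h1 : Function.update (Function.update x ν 0) ν t = Function.update x ν t :=
        Function.update_idem _ _ _
      have h2 := eval_update_affine (hma ν) (Function.update x ν 0) t
      rw [h1] at h2
      rw [h2]
      have h3 : Function.update x ν 0 ν = 0 := Function.update_self _ _ _
      have h4 : eval (Function.update x ν 0) (pderiv ν P) = eval x (pderiv ν P) :=
        eval_indep hAi x 0
      rw [h3, h4, ← hA]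
      show β x + (t - 0) * α x = β x + t * α x
      ring
    have hevalx : ∀ x : Fin n → ℝ, eval x P = β x + x ν * α x := by
      intro x
      conv_lhs => rw [show x = Function.update x ν (x ν) from (Function.update_eq_self ν x).symm]
      exact hkey x (x ν)
    -- bounds on the sign regions of A
    obtain ⟨Np, Nm, hWp, hWm, hsum⟩ :
        ∃ Np Nm : ℕ,
          ((compsOf {x : Fin n → ℝ | 0 < (1:ℝ) * eval x A}).Finite ∧
            (compsOf {x : Fin n → ℝ | 0 < (1:ℝ) * eval x A}).ncard ≤ Np) ∧
          ((compsOf {x : Fin n → ℝ | 0 < (-1:ℝ) * eval x A}).Finite ∧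
            (compsOf {x : Fin n → ℝ | 0 < (-1:ℝ) * eval x A}).ncard ≤ Nm) ∧
          Np + Nm ≤ 2 ^ (d - 1) := by
      rcases Nat.eq_zero_or_pos A.totalDegree with hconst | hApos
      · have hc : coeff 0 A ≠ 0 := by
          have h7 := eval_ne_zero_of_totalDegree_eq_zero hAne hconst (fun _ => 0)
          rwa [eval_const_of_totalDegree_eq_zero hconst] at h7
        rcases lt_or_gt_of_ne hc with hneg | hposc
        · exact ⟨0, 1, comps_W_const_empty hconst 1 (by nlinarith),
            comps_W_const hconst (-1) (by nlinarith), Nat.one_le_two_pow⟩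
        · exact ⟨1, 0, comps_W_const hconst 1 (by nlinarith),
            comps_W_const_empty hconst (-1) (by nlinarith), Nat.one_le_two_pow⟩
      · have hAdeg : A.totalDegree ≤ d - 1 := by
          have h8 := totalDegree_pderiv_lt hAne
          rw [← hA] at h8
          omega
        have hd2 : 2 ≤ d := by
          have := le_trans hApos hAdeg
          omega
        have hset1 : {x : Fin n → ℝ | 0 < (1:ℝ) * eval x A}
            = {x : Fin n → ℝ | 0 < eval x A} := by
          ext x; simp
        have hset2 : {x : Fin n → ℝ | 0 < (-1:ℝ) * eval x A}
            = {x : Fin n → ℝ | 0 < eval x (-A)} := by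
          ext x
          simp only [Set.mem_setOf_eq, eval_neg]
          constructor <;> intro h <;> linarith
        refine ⟨2 ^ (d - 1 - 1), 2 ^ (d - 1 - 1), ?_, ?_, ?_⟩
        · rw [hset1]
          exact sign_comps_bound (d - 1) A hAma hAne hAdeg
        · rw [hset2]
          exact sign_comps_bound (d - 1) (-A) (fun j => by rw [degreeOf_neg]; exact hAma j)
            (neg_ne_zero.2 hAne) (by rw [totalDegree_neg]; exact hAdeg)
        · have h9 : 2 ^ (d - 1 - 1) + 2 ^ (d - 1 - 1) = 2 ^ (d - 1 - 1 + 1) := by ring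
          rw [h9]
          have h10 : d - 1 - 1 + 1 = d - 1 := by omega
          rw [h10]
    -- components of {A ≠ 0}
    set Wp := {x : Fin n → ℝ | 0 < (1:ℝ) * eval x A} with hWpdef
    set Wm := {x : Fin n → ℝ | 0 < (-1:ℝ) * eval x A} with hWmdef
    have hWpopen : IsOpen Wp := isOpen_lt continuous_const (continuous_const.mul (continuous_eval A))
    have hWmopen : IsOpen Wm := isOpen_lt continuous_const (continuous_const.mul (continuous_eval A))
    have hdisj : Disjoint Wp Wm := by
      rw [Set.disjoint_left]
      rintro x hx1 hx2
      have h1 : 0 < (1:ℝ) * eval x A := hx1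
      have h2 : 0 < (-1:ℝ) * eval x A := hx2
      linarith
    have hunion : {x : Fin n → ℝ | eval x A ≠ 0} = Wp ∪ Wm := by
      ext x
      simp only [hWpdef, hWmdef, Set.mem_setOf_eq, Set.mem_union]
      constructor
      · intro h
        rcases lt_or_gt_of_ne h with h' | h'
        · right; linarith
        · left; linarith
      · rintro (h | h) <;> intro h0 <;> rw [h0] at h <;> simp at h
    have hNfin : (compsOf {x : Fin n → ℝ | eval x A ≠ 0}).Finite := by
      rw [hunion]
      exact (hWp.1.union hWm.1).subset (compsOf_union_subset hWpopen hWmopen hdisj)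
    have hNcard : (compsOf {x : Fin n → ℝ | eval x A ≠ 0}).ncard ≤ 2 ^ (d - 1) := by
      rw [hunion]
      calc (compsOf (Wp ∪ Wm)).ncard
          ≤ (compsOf Wp ∪ compsOf Wm).ncard :=
            Set.ncard_le_ncard (compsOf_union_subset hWpopen hWmopen hdisj)
              (hWp.1.union hWm.1)
        _ ≤ (compsOf Wp).ncard + (compsOf Wm).ncard := Set.ncard_union_le _ _
        _ ≤ Np + Nm := Nat.add_le_add hWp.2 hWm.2
        _ ≤ 2 ^ (d - 1) := hsum
    -- comps of the graph part G := Z ∩ {A ≠ 0}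
    set G := Z ∩ {x : Fin n → ℝ | eval x A ≠ 0} with hG
    have hGbound : (compsOf G).Finite ∧ (compsOf G).ncard ≤ 2 ^ (d - 1) := by
      refine comps_le (f := fun x => Function.update x ν (-(β x) / α x))
        (Y₁ := {x : Fin n → ℝ | eval x A ≠ 0}) ?_ ?_ ?_ hNfin hNcard
      · apply continuousOn_update
        exact (hβc.neg).continuousOn.div hαc.continuousOn (fun x hx => hx)
      · intro x hx
        constructor
        · show eval (Function.update x ν (-(β x) / α x)) P = 0
          rw [hkey]
          have hxne : α x ≠ 0 := hx
          field_simp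
          ring
        · show eval (Function.update x ν (-(β x) / α x)) A ≠ 0
          have h13 : eval (Function.update x ν (-(β x) / α x)) A = α x :=
            hαupd x (-(β x) / α x)
          rw [h13]
          exact hx
      · intro y hy
        obtain ⟨hy1, hy2⟩ := hy
        have hy1' : eval y P = 0 := hy1
        have hy2' : α y ≠ 0 := hy2
        refine ⟨y, hy2, ?_⟩
        have hyν : y ν = -(β y) / α y := by
          have h11 := hevalx y
          rw [hy1'] at h11
          field_simp
          linarith
        have h12 : Function.update y ν (-(β y) / α y) = y := by
          rw [← hyν]
          exact Function.update_eq_self ν y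
        show Function.update y ν (-(β y) / α y) ∈ connectedComponentIn G y
        rw [h12]
        exact mem_connectedComponentIn ⟨hy1, hy2⟩
    -- finally : every component of Z meets G
    refine comps_le (f := fun x : Fin n → ℝ => x) (Y₁ := G) (Y₂ := Z)
      continuousOn_id (fun x hx => hx.1) ?_ hGbound.1 hGbound.2
    intro y hy
    obtain ⟨w, hw1, hw2⟩ := every_comp_meets hma hAne (hy : eval y P = 0)
    have hwZ : w ∈ Z := connectedComponentIn_subset Z y hw1
    exact ⟨w, ⟨hwZ, hw2⟩, hw1⟩

end MultiAffine

/-- The real zero set of a non-zero multi-affine polynomial of degree at most `d`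
in `n` variables has at most `2^(d-1)` connected components. -/
theorem multiaffine_zero_set_components_le (n d : ℕ) (hn : 1 ≤ n) (hd : 1 ≤ d)
    (P : MvPolynomial (Fin n) ℝ) (hP : P ≠ 0)
    (hma : ∀ i : Fin n, P.degreeOf i ≤ 1)
    (hdeg : P.totalDegree ≤ d) :
    letI Z : Set (Fin n → ℝ) := {x | eval x P = 0}
    letI comps : Set (Set (Fin n → ℝ)) := {K | ∃ x ∈ Z, K = connectedComponentIn Z x}
    comps.Finite ∧ comps.ncard ≤ 2 ^ (d - 1) := by
  exact MultiAffine.main_bound d hd P hP hma hdeg
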